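/- For all pairs w ≤ y in W there exist unique elements Q_{w,y} ∈ R such that for all w ≤ z in W one has Σ_{w ≤ y ≤ z} (−1)^{ℓ(y)−ℓ(w)} Q_{w,y} P_{y,z} = δ_{w,z}. Moreover each Q_{w,y} lies in ℤ[q], Q_{w,w} = 1, and deg Q_{w,y} ≤ (ℓ(y)−ℓ(w)−1)/2 whenever w < y. -/

import Mathlib

namespace KLPaper

open Polynomial
open scoped Classical

variable {B : Type*} {W : Type*} [Group W] {M : CoxeterMatrix B}

/-- The Bruhat order on a Coxeter group: generated by right multiplication by
reflections which increases the length. -/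
def bruhatLE (cs : CoxeterSystem M W) : W → W → Prop :=
  Relation.ReflTransGen (fun x y =>
    (∃ t, cs.IsReflection t ∧ y = x * t) ∧ cs.length x < cs.length y)

/-- A commutative ring `R` containing `ℤ[q,q⁻¹]`, with a direct sum decomposition
`R = ⊕_{k ∈ ℤ} R_k` into additive subgroups and an involutive ring endomorphism `conj`
such that `R_i R_j ⊆ R_{i+j}`, `conj R_i = R_{-i}`, `1 ∈ R_0`, `q ∈ R_2`, `conj q = q⁻¹`. -/
structure KLRing (R : Type*) [CommRing R] where
  q : R
  qinv : R
  q_qinv : q * qinv = 1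
  grade : ℤ → AddSubgroup R
  decomp : DirectSum.IsInternal grade
  conj : R →+* R
  conj_conj : ∀ r : R, conj (conj r) = r
  grade_mul : ∀ (i j : ℤ) (r s : R), r ∈ grade i → s ∈ grade j → r * s ∈ grade (i + j)
  conj_grade : ∀ (i : ℤ) (r : R), r ∈ grade i → conj r ∈ grade (-i)
  one_mem : (1 : R) ∈ grade 0
  q_mem : q ∈ grade 2
  conj_q : conj q = qinv
  laurent_inj : Function.Injective fun f : ℤ →₀ ℤ =>
    f.sum fun k c => c • (if 0 ≤ k then q ^ k.toNat else qinv ^ (-k).toNat)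

variable {R : Type*} [CommRing R]

/-- The subgroup `R_0 + R_1 + ⋯ + R_{n-1} = ⊕_{i=0}^{n-1} R_i` of `R`. -/
def KLRing.gradeSum (K : KLRing R) (n : ℕ) : AddSubgroup R :=
  ⨆ i ∈ Finset.range n, K.grade (i : ℤ)

/-- `r` belongs to `ℤ[q] ⊆ R`. -/
def KLRing.InZq (K : KLRing R) (r : R) : Prop :=
  ∃ p : Polynomial ℤ, Polynomial.aeval K.q p = r

/-- The Hecke algebra of `(W, S)` over `R`: the free `R`-module with basis
`{T_w}_{w ∈ W}`, with multiplication determined by `T_{w₁} T_{w₂} = T_{w₁ w₂}`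
whenever `ℓ(w₁w₂) = ℓ(w₁) + ℓ(w₂)` and `(T_s + 1)(T_s - q) = 0` for `s ∈ S`. -/
structure Hecke (cs : CoxeterSystem M W) (R : Type*) [CommRing R] (q : R) where
  carrier : Type*
  [ring : Ring carrier]
  [alg : Algebra R carrier]
  T : W → carrier
  basis : Module.Basis W R carrier
  basis_eq : ∀ w : W, basis w = T w
  T_mul : ∀ w₁ w₂ : W, cs.length (w₁ * w₂) = cs.length w₁ + cs.length w₂ →
    T w₁ * T w₂ = T (w₁ * w₂)
  T_quad : ∀ i : B, (T (cs.simple i) + 1) * (T (cs.simple i) - algebraMap R carrier q) = 0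

attribute [instance] Hecke.ring Hecke.alg

variable {cs : CoxeterSystem M W}

/-- `bar` is the bar involution `Σ r_w T_w ↦ Σ conj(r_w) (T_{w⁻¹})⁻¹` of the Hecke algebra. -/
def IsBar (K : KLRing R) (Hk : Hecke cs R K.q) (bar : Hk.carrier →+* Hk.carrier) : Prop :=
  ∀ (r : R) (w : W), bar (r • Hk.T w) = K.conj r • Ring.inverse (Hk.T w⁻¹)

/-- `j` is the involution `j(Σ r_w T_w) = Σ r_w (-q)^{ℓ(w)} (T_{w⁻¹})⁻¹` of the Hecke algebra. -/
def IsJ (K : KLRing R) (Hk : Hecke cs R K.q) (j : Hk.carrier →ₐ[R] Hk.carrier) : Prop :=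
  ∀ w : W, j (Hk.T w) = (-K.q) ^ cs.length w • Ring.inverse (Hk.T w⁻¹)

/-- `C` is the Kazhdan–Lusztig basis element `C_w`:
`C = Σ_{y ≤ w} P_{y,w} T_y` with `P_{w,w} = 1`,
`P_{y,w} ∈ ⊕_{i=0}^{ℓ(w)-ℓ(y)-1} R_i` for `y < w`, and `bar C = q^{-ℓ(w)} C`.
(The coefficient `P_{y,w}` of `C_w` is `Hk.basis.repr C y`.) -/
def IsKLElt (K : KLRing R) (Hk : Hecke cs R K.q)
    (bar : Hk.carrier →+* Hk.carrier) (w : W) (C : Hk.carrier) : Prop :=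
  Hk.basis.repr C w = 1 ∧
  (∀ y : W, Hk.basis.repr C y ≠ 0 → bruhatLE cs y w) ∧
  (∀ y : W, bruhatLE cs y w → y ≠ w →
    Hk.basis.repr C y ∈ K.gradeSum (cs.length w - cs.length y)) ∧
  bar C = K.qinv ^ cs.length w • C

/-- The standard parabolic subgroup `W_J = ⟨J⟩`. -/
def WJ (cs : CoxeterSystem M W) (J : Set B) : Subgroup W :=
  Subgroup.closure (cs.simple '' J)

/-- `W^J`: the set of minimal length coset representatives of `W/W_J`,
i.e. the `w ∈ W` with `ws > w` for all `s ∈ J`. -/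
def minReps (cs : CoxeterSystem M W) (J : Set B) : Set W :=
  {w | ∀ i ∈ J, cs.length w < cs.length (w * cs.simple i)}

/-- The Hecke algebra `H(W_J)` of the standard parabolic subgroup `W_J`
(with generating set `J`; the length function of `(W_J, J)` is the restriction
of that of `(W, S)`). -/
structure HeckeJ (cs : CoxeterSystem M W) (J : Set B) (R : Type*) [CommRing R] (q : R) where
  carrier : Type*
  [ring : Ring carrier]
  [alg : Algebra R carrier]
  T : WJ cs J → carrier
  basis : Module.Basis (WJ cs J) R carrier
  basis_eq : ∀ x, basis x = T x
  T_mul : ∀ x₁ x₂ : WJ cs J,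
    cs.length ((x₁ : W) * (x₂ : W)) = cs.length (x₁ : W) + cs.length (x₂ : W) →
    T x₁ * T x₂ = T (x₁ * x₂)
  T_quad : ∀ (i : B) (hi : i ∈ J),
    (T ⟨cs.simple i, Subgroup.subset_closure ⟨i, hi, rfl⟩⟩ + 1) *
      (T ⟨cs.simple i, Subgroup.subset_closure ⟨i, hi, rfl⟩⟩ - algebraMap R carrier q) = 0

attribute [instance] HeckeJ.ring HeckeJ.alg

/-- `(Mod, φ)` is (a realization of) the induced module `H^{J,a} = H ⊗_{H(W_J)} R^a`
together with `φ = φ^{J,a} : h ↦ h ⊗ 1^a`:  `φ` is surjective and its kernel is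
the `R`-span of the elements `h (T_s - a)`, `s ∈ J`, which is exactly the kernel of
`h ↦ h ⊗ 1^a`. -/
def IsInduced {q : R} (Hk : Hecke cs R q) (J : Set B) (a : R)
    (Mod : Type*) [AddCommGroup Mod] [Module R Mod] (φ : Hk.carrier →ₗ[R] Mod) : Prop :=
  Function.Surjective φ ∧
  LinearMap.ker φ = Submodule.span R
    {h : Hk.carrier | ∃ (g : Hk.carrier) (i : B), i ∈ J ∧
      h = g * (Hk.T (cs.simple i) - algebraMap R Hk.carrier a)}

/-- `C` is the parabolic Kazhdan–Lusztig basis element `C_w^{J,a}` of `H^{J,a}`: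
`C = Σ_{y ∈ W^J, y ≤ w} P^{J,a}_{y,w} T_y^{J,a}` with `P^{J,a}_{w,w} = 1`,
`P^{J,a}_{y,w} ∈ ⊕_{i=0}^{ℓ(w)-ℓ(y)-1} R_i` for `y < w`, and `barJ C = q^{-ℓ(w)} C`,
where `b` is the basis `(T_y^{J,a})_{y ∈ W^J}` of `H^{J,a}` and `barJ` its bar involution.
(The coefficient `P^{J,a}_{y,w}` of `C_w^{J,a}` is `b.repr C y`.) -/
def IsKLEltJ (K : KLRing R) {J : Set B} {Mod : Type*} [AddCommGroup Mod] [Module R Mod]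
    (b : Module.Basis (minReps cs J) R Mod) (barJ : Mod →+ Mod)
    (w : minReps cs J) (C : Mod) : Prop :=
  b.repr C w = 1 ∧
  (∀ y : minReps cs J, b.repr C y ≠ 0 → bruhatLE cs y.1 w.1) ∧
  (∀ y : minReps cs J, bruhatLE cs y.1 w.1 → y ≠ w →
    b.repr C y ∈ K.gradeSum (cs.length w.1 - cs.length y.1)) ∧
  barJ C = K.qinv ^ cs.length w.1 • C


/-! ### Auxiliary lemmas -/

section BruhatAux

variable {cs : CoxeterSystem M W}

lemma bruhatLE_refl (cs : CoxeterSystem M W) (w : W) : bruhatLE cs w w :=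
  Relation.ReflTransGen.refl

lemma bruhatLE_length_le {x y : W} (h : bruhatLE cs x y) : cs.length x ≤ cs.length y := by
  induction h with
  | refl => exact le_rfl
  | tail _ step ih => exact ih.trans (le_of_lt step.2)

lemma bruhatLE_length_lt {x y : W} (h : bruhatLE cs x y) (hne : x ≠ y) :
    cs.length x < cs.length y := by
  rcases Relation.ReflTransGen.cases_tail h with rfl | ⟨c, hc, hr⟩
  · exact absurd rfl hne
  · exact lt_of_le_of_lt (bruhatLE_length_le hc) hr.2

lemma bruhatLE_antisymm {x y : W} (h : bruhatLE cs x y) (h' : bruhatLE cs y x) : x = y := by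
  by_contra hne
  exact absurd (bruhatLE_length_lt h hne) (not_lt.mpr (bruhatLE_length_le h'))

end BruhatAux


namespace KLRing
open scoped DirectSum
variable (K : KLRing R)

lemma qinv_q : K.qinv * K.q = 1 := by rw [mul_comm]; exact K.q_qinv

/-- `q` as a unit of `R`. -/
def qU : Rˣ := ⟨K.q, K.qinv, K.q_qinv, K.qinv_q⟩

@[simp] lemma qU_val : (K.qU : R) = K.q := rfl
@[simp] lemma qU_inv_val : ((K.qU⁻¹ : Rˣ) : R) = K.qinv := rfl

lemma qpow_natCast (m : ℕ) : ((K.qU ^ (m : ℤ) : Rˣ) : R) = K.q ^ m := by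
  rw [zpow_natCast, Units.val_pow_eq_pow_val, qU_val]

lemma qpow_neg_natCast (m : ℕ) : ((K.qU ^ (-(m : ℤ)) : Rˣ) : R) = K.qinv ^ m := by
  rw [zpow_neg, ← inv_zpow, zpow_natCast, Units.val_pow_eq_pow_val, qU_inv_val]

lemma conj_qinv : K.conj K.qinv = K.q := by
  rw [← K.conj_q, K.conj_conj]

lemma qinv_mem : K.qinv ∈ K.grade (-2) := by
  have := K.conj_grade 2 K.q K.q_mem
  rwa [K.conj_q] at this

lemma qpow_mem (k : ℤ) : ((K.qU ^ k : Rˣ) : R) ∈ K.grade (2 * k) := by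
  have hq : ∀ m : ℕ, K.q ^ m ∈ K.grade (2 * m) := by
    intro m
    induction m with
    | zero => simpa using K.one_mem
    | succ m ih =>
        have := K.grade_mul _ _ _ _ ih K.q_mem
        have h2 : (2*(m:ℤ)) + 2 = 2*((m+1:ℕ):ℤ) := by push_cast; ring
        rw [pow_succ, ← h2]
        exact this
  have hqi : ∀ m : ℕ, K.qinv ^ m ∈ K.grade (-(2 * m)) := by
    intro m
    induction m with
    | zero => simpa using K.one_mem
    | succ m ih =>
        have := K.grade_mul _ _ _ _ ih K.qinv_mem
        have h2 : (-(2*(m:ℤ))) + -2 = -(2*((m+1:ℕ):ℤ)) := by push_cast; ring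
        rw [pow_succ, ← h2]
        exact this
  rcases le_or_gt 0 k with hk | hk
  · obtain ⟨m, rfl⟩ := Int.eq_ofNat_of_zero_le hk
    rw [qpow_natCast]
    exact_mod_cast hq m
  · obtain ⟨m, rfl⟩ : ∃ m : ℕ, k = -(m : ℤ) := ⟨k.natAbs, by omega⟩
    rw [qpow_neg_natCast]
    convert hqi m using 2
    push_cast; ring

lemma conj_qpow (k : ℤ) : K.conj ((K.qU ^ k : Rˣ) : R) = ((K.qU ^ (-k) : Rˣ) : R) := by
  have hu : Units.map (K.conj : R →* R) K.qU = K.qU⁻¹ := by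
    ext
    simp [K.conj_q]
  calc K.conj ((K.qU ^ k : Rˣ) : R) = ((Units.map (K.conj : R →* R) (K.qU ^ k) : Rˣ) : R) := by
        rw [Units.coe_map]
        rfl
    _ = ((K.qU ^ (-k) : Rˣ) : R) := by rw [map_zpow, hu, inv_zpow']

/-- The Laurent-polynomial evaluation homomorphism `ℤ[q,q⁻¹] → R`. -/
noncomputable def laurHom : AddMonoidAlgebra ℤ ℤ →ₐ[ℤ] R :=
  AddMonoidAlgebra.lift ℤ R ℤ ((Units.coeHom R).comp (zpowersHom Rˣ K.qU))

lemma laurHom_single (k c : ℤ) :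
    K.laurHom (AddMonoidAlgebra.single k c) = c • ((K.qU ^ k : Rˣ) : R) := by
  rw [laurHom, AddMonoidAlgebra.lift_single]
  rfl

/-- `r ∈ ℤ[q, q⁻¹] ⊆ R`. -/
def IsLaurent (r : R) : Prop := ∃ f : AddMonoidAlgebra ℤ ℤ, K.laurHom f = r

lemma isLaurent_zero : K.IsLaurent 0 := ⟨0, map_zero _⟩
lemma isLaurent_one : K.IsLaurent 1 := ⟨1, map_one _⟩
lemma isLaurent_add {r s : R} (hr : K.IsLaurent r) (hs : K.IsLaurent s) :
    K.IsLaurent (r + s) := by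
  obtain ⟨f, rfl⟩ := hr; obtain ⟨g, rfl⟩ := hs; exact ⟨f + g, map_add _ _ _⟩
lemma isLaurent_mul {r s : R} (hr : K.IsLaurent r) (hs : K.IsLaurent s) :
    K.IsLaurent (r * s) := by
  obtain ⟨f, rfl⟩ := hr; obtain ⟨g, rfl⟩ := hs; exact ⟨f * g, map_mul _ _ _⟩
lemma isLaurent_sub {r s : R} (hr : K.IsLaurent r) (hs : K.IsLaurent s) :
    K.IsLaurent (r - s) := by
  obtain ⟨f, rfl⟩ := hr; obtain ⟨g, rfl⟩ := hs; exact ⟨f - g, map_sub _ _ _⟩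
lemma isLaurent_qpow (k : ℤ) : K.IsLaurent ((K.qU ^ k : Rˣ) : R) :=
  ⟨AddMonoidAlgebra.single k 1, by rw [laurHom_single, one_smul]⟩
lemma isLaurent_sum {ι : Type*} (s : Finset ι) (g : ι → R)
    (h : ∀ i ∈ s, K.IsLaurent (g i)) : K.IsLaurent (∑ i ∈ s, g i) := by
  classical
  induction s using Finset.induction with
  | empty => simpa using K.isLaurent_zero
  | insert _ _ hx ih =>
      rw [Finset.sum_insert hx]
      exact K.isLaurent_add (h _ (Finset.mem_insert_self _ _))
        (ih fun i hi => h i (Finset.mem_insert_of_mem hi))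

lemma isLaurent_int (a : ℤ) : K.IsLaurent ((a : R)) :=
  ⟨AddMonoidAlgebra.single 0 a, by rw [laurHom_single]; simp⟩

lemma isLaurent_q_pow (m : ℕ) : K.IsLaurent (K.q ^ m) := by
  have := K.isLaurent_qpow (m : ℤ)
  rwa [qpow_natCast] at this

lemma isLaurent_conj {r : R} (hr : K.IsLaurent r) : K.IsLaurent (K.conj r) := by
  obtain ⟨f, rfl⟩ := hr
  induction f using AddMonoidAlgebra.induction with
  | zero => simpa using K.isLaurent_zero
  | single_add k c f hk hc ih =>
      rw [map_add, map_add]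
      refine K.isLaurent_add ?_ ih
      refine ⟨AddMonoidAlgebra.single (-k) c, ?_⟩
      rw [laurHom_single]
      have h1 : K.laurHom (AddMonoidAlgebra.single k c) = c • ((K.qU ^ k : Rˣ) : R) := K.laurHom_single k c
      rw [h1, map_zsmul, conj_qpow]

lemma isLaurent_aeval_q (p : Polynomial ℤ) : K.IsLaurent (Polynomial.aeval K.q p) := by
  induction p using Polynomial.induction_on with
  | C a => rw [Polynomial.aeval_C, algebraMap_int_eq, eq_intCast]; exact K.isLaurent_int a
  | add p q hp hq => rw [map_add]; exact K.isLaurent_add hp hq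
  | monomial n a ih =>
      rw [map_mul, map_pow, Polynomial.aeval_X, Polynomial.aeval_C, algebraMap_int_eq, eq_intCast]
      exact K.isLaurent_mul (K.isLaurent_int a) (K.isLaurent_q_pow (n+1))


include K in
lemma nontrivial : Nontrivial R := by
  rcases subsingleton_or_nontrivial R with h | h
  · exfalso
    have hinj := K.laurent_inj
    have h0 := hinj (a₁ := Finsupp.single 0 1) (a₂ := 0) (Subsingleton.elim _ _)
    rw [Finsupp.single_eq_zero] at h0
    exact one_ne_zero h0
  · exact h

lemma mem_gradeSum {n : ℕ} {r : R} (h : r ∈ K.gradeSum n) :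
    ∃ c : ℕ → R, (∀ i : ℕ, c i ∈ K.grade (i : ℤ)) ∧ r = ∑ i ∈ Finset.range n, c i := by
  induction n generalizing r with
  | zero =>
      have hb : K.gradeSum 0 = ⊥ := by
        apply le_antisymm _ bot_le
        refine iSup₂_le fun i hi => absurd hi (by simp)
      rw [hb, AddSubgroup.mem_bot] at h
      exact ⟨fun _ => 0, fun i => zero_mem _, by simp [h]⟩
  | succ n ih =>
      have hsplit : K.gradeSum (n + 1) = K.gradeSum n ⊔ K.grade (n : ℤ) := by
        rw [KLRing.gradeSum, Finset.range_add_one, Finset.iSup_insert, sup_comm]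
        rfl
      rw [hsplit, AddSubgroup.mem_sup] at h
      obtain ⟨y, hy, z, hz, rfl⟩ := h
      obtain ⟨c, hc, rfl⟩ := ih hy
      refine ⟨fun i => if i = n then z else c i, fun i => ?_, ?_⟩
      · by_cases hi : i = n
        · subst hi; simpa using hz
        · simpa [hi] using hc i
      · rw [Finset.sum_range_succ]
        simp only [if_pos rfl]
        congr 1
        exact (Finset.sum_congr rfl fun i hi => by
          rw [if_neg (ne_of_mem_of_not_mem hi (by simp))]).symm


/-- Truncation: the sum of the graded components in degrees `0, …, n-1`. -/
noncomputable def trunc (n : ℕ) : (⨁ i : ℤ, K.grade i) →+ R :=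
  ∑ j ∈ Finset.range n, ((K.grade (j : ℤ)).subtype).comp (DFinsupp.evalAddMonoidHom (j : ℤ))

lemma trunc_of (n : ℕ) (i : ℤ) (x : K.grade i) :
    K.trunc n (DirectSum.of (fun i : ℤ => K.grade i) i x) =
      if 0 ≤ i ∧ i < n then (x : R) else 0 := by
  have heval : ∀ (j : ℤ) (v : ⨁ i : ℤ, K.grade i), (DFinsupp.evalAddMonoidHom j) v = v j :=
    fun _ _ => rfl
  rw [trunc, AddMonoidHom.finset_sum_apply]
  by_cases h : 0 ≤ i ∧ i < n
  · rw [if_pos h]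
    obtain ⟨m, hmn, rfl⟩ : ∃ m : ℕ, m < n ∧ ((m : ℕ) : ℤ) = i := ⟨i.toNat, by omega, by omega⟩
    rw [Finset.sum_eq_single m]
    · exact congrArg Subtype.val (DirectSum.of_eq_same (β := fun i : ℤ => K.grade i) _ x)
    · intro j hj hne
      have hne' : ((m : ℕ) : ℤ) ≠ ((j : ℕ) : ℤ) := by exact_mod_cast Ne.symm hne
      exact (congrArg Subtype.val (DirectSum.of_eq_of_ne (β := fun i : ℤ => K.grade i)
        _ _ x hne'.symm)).trans (ZeroMemClass.coe_zero _)
    · intro hnot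
      exact absurd (Finset.mem_range.mpr hmn) hnot
  · rw [if_neg h]
    apply Finset.sum_eq_zero
    intro j hj
    rw [Finset.mem_range] at hj
    have hne' : i ≠ ((j : ℕ) : ℤ) := by
      intro hc
      exact h ⟨by omega, by omega⟩
    exact (congrArg Subtype.val (DirectSum.of_eq_of_ne (β := fun i : ℤ => K.grade i)
      _ _ x hne'.symm)).trans (ZeroMemClass.coe_zero _)

lemma laurHom_apply (f : AddMonoidAlgebra ℤ ℤ) :
    K.laurHom f = ∑ k ∈ f.coeff.support, f.coeff k • ((K.qU ^ k : Rˣ) : R) := by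
  rw [laurHom, AddMonoidAlgebra.lift_apply]
  rfl

lemma graded_cancel {n : ℕ} (hn : 1 ≤ n) {P A : R} (hP : P ∈ K.gradeSum n)
    (hA : K.IsLaurent A)
    (heq : P = K.q ^ n * K.conj P + A) :
    ∃ p : Polynomial ℤ, Polynomial.aeval K.q p = P ∧ 2 * p.natDegree + 1 ≤ n := by
  obtain ⟨c, hc, hPc⟩ := K.mem_gradeSum hP
  obtain ⟨f, hfA⟩ := hA
  have hqn : K.q ^ n ∈ K.grade (2 * (n : ℤ)) := by
    have := K.qpow_mem (n : ℤ)
    rwa [K.qpow_natCast] at this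
  let G := fun i : ℤ => K.grade i
  let u : ⨁ i : ℤ, K.grade i :=
    ∑ i ∈ Finset.range n, DirectSum.of (fun i : ℤ => K.grade i) (i : ℤ) ⟨c i, hc i⟩
  let v₁ : ⨁ i : ℤ, K.grade i :=
    ∑ k ∈ f.coeff.support, DirectSum.of (fun i : ℤ => K.grade i) (2 * k)
      ⟨f.coeff k • ((K.qU ^ k : Rˣ) : R), AddSubgroup.zsmul_mem _ (K.qpow_mem k) (f.coeff k)⟩
  let v₂ : ⨁ i : ℤ, K.grade i :=
    ∑ i ∈ Finset.range n, DirectSum.of (fun i : ℤ => K.grade i) (2 * (n : ℤ) + -(i : ℤ))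
      ⟨K.q ^ n * K.conj (c i), K.grade_mul _ _ _ _ hqn (K.conj_grade _ _ (hc i))⟩
  have hcoe : ∀ x : ⨁ i : ℤ, K.grade i,
      DirectSum.coeAddMonoidHom G x = (DirectSum.coeAddMonoidHom G) x := fun _ => rfl
  have hu : DirectSum.coeAddMonoidHom G u = P := by
    rw [map_sum]
    simp only [G, DirectSum.coeAddMonoidHom_of]
    exact hPc.symm
  have hv₁ : DirectSum.coeAddMonoidHom G v₁ = A := by
    rw [← hfA, K.laurHom_apply, map_sum]
    simp only [G, DirectSum.coeAddMonoidHom_of]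
  have hv₂ : DirectSum.coeAddMonoidHom G v₂ = K.q ^ n * K.conj P := by
    rw [map_sum]
    simp only [G, DirectSum.coeAddMonoidHom_of]
    rw [hPc, map_sum, Finset.mul_sum]
  have huv : u = v₂ + v₁ := by
    apply K.decomp.injective
    rw [map_add, hu, hv₁, hv₂]
    exact heq
  -- apply truncation
  have htu : K.trunc n u = P := by
    rw [map_sum]
    have : ∀ i ∈ Finset.range n,
        K.trunc n (DirectSum.of (fun i : ℤ => K.grade i) (i : ℤ) ⟨c i, hc i⟩) = c i := by
      intro i hi
      rw [Finset.mem_range] at hi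
      rw [K.trunc_of, if_pos ⟨by omega, by omega⟩]
    rw [Finset.sum_congr rfl this]
    exact hPc.symm
  have htv₂ : K.trunc n v₂ = 0 := by
    rw [map_sum]
    apply Finset.sum_eq_zero
    intro i hi
    rw [Finset.mem_range] at hi
    rw [K.trunc_of, if_neg (by omega)]
  refine ⟨∑ k ∈ f.coeff.support, if 0 ≤ k ∧ 2 * k < (n : ℤ) then C (f.coeff k) * X ^ k.toNat else 0, ?_, ?_⟩
  · have hP1 : P = K.trunc n v₁ := by rw [huv, map_add, htv₂, zero_add] at htu; exact htu.symm
    rw [map_sum, hP1, map_sum]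
    apply Finset.sum_congr rfl
    intro k hk
    rw [K.trunc_of]
    by_cases h : 0 ≤ k ∧ 2 * k < (n : ℤ)
    · rw [if_pos h, if_pos (show (0:ℤ) ≤ 2*k ∧ 2*k < ((n:ℕ):ℤ) from ⟨by omega, by omega⟩)]
      rw [map_mul, map_pow, Polynomial.aeval_X, Polynomial.aeval_C]
      have hx : ((K.qU ^ k : Rˣ) : R) = K.q ^ k.toNat := by
        nth_rewrite 1 [show k = ((k.toNat : ℕ) : ℤ) by omega]
        exact K.qpow_natCast _
      show _ = f.coeff k • ((K.qU ^ k : Rˣ) : R)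
      rw [hx, zsmul_eq_mul]
      simp [algebraMap_int_eq]
    · rw [if_neg h, map_zero,
        if_neg (show ¬((0:ℤ) ≤ 2*k ∧ 2*k < ((n:ℕ):ℤ)) from by omega)]
  · have hdeg : (∑ k ∈ f.coeff.support, if 0 ≤ k ∧ 2 * k < (n:ℤ) then C (f.coeff k) * X ^ k.toNat else 0).natDegree ≤ (n - 1) / 2 := by
      apply Polynomial.natDegree_sum_le_of_forall_le
      intro k hk
      by_cases h : 0 ≤ k ∧ 2 * k < (n : ℤ)
      · rw [if_pos h]
        have h1 : (C (f.coeff k) * X ^ k.toNat).natDegree ≤ k.toNat := by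
          apply le_trans Polynomial.natDegree_mul_le
          simp
        exact le_trans h1 (by omega)
      · rw [if_neg h]; simp
    omega

end KLRing


section HeckeAux

variable {cs : CoxeterSystem M W} (K : KLRing R) (Hk : Hecke cs R K.q)

lemma repr_T (x y : W) : Hk.basis.repr (Hk.T x) y = if y = x then 1 else 0 := by
  rw [← Hk.basis_eq, Hk.basis.repr_self]
  rw [Finsupp.single_apply]
  by_cases h : y = x
  · rw [if_pos h, if_pos h.symm]
  · rw [if_neg h, if_neg (Ne.symm h)]

lemma T_one : Hk.T 1 = 1 := by
  have hfg : (LinearMap.mulLeft R (Hk.T 1)) = (LinearMap.id : Hk.carrier →ₗ[R] Hk.carrier) := by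
    apply Hk.basis.ext
    intro w
    rw [Hk.basis_eq]
    show Hk.T 1 * Hk.T w = Hk.T w
    rw [Hk.T_mul 1 w (by simp), one_mul]
  have h2 := congrArg (fun f : Hk.carrier →ₗ[R] Hk.carrier => f 1) hfg
  simpa using h2

lemma T_sq (i : B) : Hk.T (cs.simple i) * Hk.T (cs.simple i)
    = (K.q - 1) • Hk.T (cs.simple i) + K.q • (1 : Hk.carrier) := by
  have h := Hk.T_quad i
  rw [add_mul, mul_sub, mul_sub, Algebra.algebraMap_eq_smul_one,
    mul_smul_comm, mul_one] at h
  simp only [one_mul] at h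
  rw [sub_smul, one_smul]
  apply eq_of_sub_eq_zero
  rw [← h]
  abel

/-- The inverse of `T_s`. -/
noncomputable def invS (i : B) : Hk.carrier :=
  K.qinv • Hk.T (cs.simple i) + (K.qinv - 1) • (1 : Hk.carrier)

lemma T_mul_invS (i : B) : Hk.T (cs.simple i) * invS K Hk i = 1 := by
  rw [invS, mul_add, mul_smul_comm, mul_smul_comm, mul_one, T_sq K Hk i, smul_add, smul_smul,
    smul_smul]
  have e1 : K.qinv * (K.q - 1) = 1 - K.qinv := by
    rw [mul_sub, K.qinv_q, mul_one]
  have e2 : K.qinv * K.q = 1 := K.qinv_q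
  rw [e1, e2, one_smul]
  have e3 : ((1 : R) - K.qinv) • Hk.T (cs.simple i) + (K.qinv - 1) • Hk.T (cs.simple i) = 0 := by
    rw [← add_smul]
    have : (1 : R) - K.qinv + (K.qinv - 1) = 0 := by ring
    rw [this, zero_smul]
  calc ((1:R) - K.qinv) • Hk.T (cs.simple i) + 1 + (K.qinv - 1) • Hk.T (cs.simple i)
      = (((1:R) - K.qinv) • Hk.T (cs.simple i) + (K.qinv - 1) • Hk.T (cs.simple i)) + 1 := by
        abel
    _ = 1 := by rw [e3, zero_add]

lemma invS_mul_T (i : B) : invS K Hk i * Hk.T (cs.simple i) = 1 := by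
  rw [invS, add_mul, smul_mul_assoc, smul_mul_assoc, one_mul, T_sq K Hk i, smul_add, smul_smul,
    smul_smul]
  have e1 : K.qinv * (K.q - 1) = 1 - K.qinv := by
    rw [mul_sub, K.qinv_q, mul_one]
  have e2 : K.qinv * K.q = 1 := K.qinv_q
  rw [e1, e2, one_smul]
  have e3 : ((1 : R) - K.qinv) • Hk.T (cs.simple i) + (K.qinv - 1) • Hk.T (cs.simple i) = 0 := by
    rw [← add_smul]
    have : (1 : R) - K.qinv + (K.qinv - 1) = 0 := by ring
    rw [this, zero_smul]
  calc ((1:R) - K.qinv) • Hk.T (cs.simple i) + 1 + (K.qinv - 1) • Hk.T (cs.simple i)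
      = (((1:R) - K.qinv) • Hk.T (cs.simple i) + (K.qinv - 1) • Hk.T (cs.simple i)) + 1 := by
        abel
    _ = 1 := by rw [e3, zero_add]

lemma isUnit_T_simple (i : B) : IsUnit (Hk.T (cs.simple i)) :=
  ⟨⟨Hk.T (cs.simple i), invS K Hk i, T_mul_invS K Hk i, invS_mul_T K Hk i⟩, rfl⟩

lemma isUnit_T (u : W) : IsUnit (Hk.T u) := by
  suffices H : ∀ (n : ℕ) (u : W), cs.length u = n → IsUnit (Hk.T u) from H _ u rfl
  intro n
  induction n using Nat.strong_induction_on with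
  | _ n ih =>
    intro u hn
    rcases eq_or_ne u 1 with rfl | hu
    · rw [T_one]
      exact isUnit_one
    · obtain ⟨i, hi⟩ := cs.exists_leftDescent_of_ne_one hu
      have hlen : cs.length (cs.simple i * u) + 1 = cs.length u := cs.isLeftDescent_iff.mp hi
      have hmul := Hk.T_mul (cs.simple i) (cs.simple i * u) (by
        rw [cs.simple_mul_simple_cancel_left, cs.length_simple]
        omega)
      rw [cs.simple_mul_simple_cancel_left] at hmul
      rw [← hmul]
      exact (isUnit_T_simple K Hk i).mul (ih _ (by omega) _ rfl)


lemma ring_inverse_eq (a b : Hk.carrier) (ha : IsUnit a) (hab : a * b = 1) :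
    Ring.inverse a = b := by
  calc Ring.inverse a = Ring.inverse a * (a * b) := by rw [hab, mul_one]
    _ = (Ring.inverse a * a) * b := by rw [mul_assoc]
    _ = b := by rw [Ring.inverse_mul_cancel _ ha, one_mul]

lemma invS_mul_T_case (i : B) (x : W) :
    invS K Hk i * Hk.T x =
      if cs.length (cs.simple i * x) = cs.length x + 1
      then K.qinv • Hk.T (cs.simple i * x) + (K.qinv - 1) • Hk.T x
      else Hk.T (cs.simple i * x) := by
  by_cases hd : cs.length (cs.simple i * x) = cs.length x + 1
  · rw [if_pos hd, invS, add_mul, smul_mul_assoc, smul_mul_assoc, one_mul,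
      Hk.T_mul _ _ (by rw [cs.length_simple]; omega)]
  · rw [if_neg hd]
    have hd' : cs.length (cs.simple i * x) + 1 = cs.length x :=
      (cs.length_simple_mul x i).resolve_left hd
    have hmul := Hk.T_mul (cs.simple i) (cs.simple i * x) (by
      rw [cs.simple_mul_simple_cancel_left, cs.length_simple]
      omega)
    rw [cs.simple_mul_simple_cancel_left] at hmul
    rw [← hmul, ← mul_assoc, invS_mul_T, one_mul]

lemma repr_invS_mul (i : B) (h : Hk.carrier) (y : W) :
    Hk.basis.repr (invS K Hk i * h) y =
      if cs.length (cs.simple i * y) = cs.length y + 1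
      then (K.qinv - 1) * Hk.basis.repr h y + Hk.basis.repr h (cs.simple i * y)
      else K.qinv * Hk.basis.repr h (cs.simple i * y) := by
  have hsy : cs.simple i * y ≠ y := fun he => cs.length_simple_mul_ne y i (by rw [he])
  have hkey : ∀ x : W, Hk.basis.repr (invS K Hk i * Hk.T x) y =
      (if cs.length (cs.simple i * y) = cs.length y + 1
      then (K.qinv - 1) * Hk.basis.repr (Hk.T x) y + Hk.basis.repr (Hk.T x) (cs.simple i * y)
      else K.qinv * Hk.basis.repr (Hk.T x) (cs.simple i * y)) := by
    intro x
    have hiff : (y = cs.simple i * x) ↔ (cs.simple i * y = x) :=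
      ⟨fun he => by rw [he, cs.simple_mul_simple_cancel_left],
       fun he => by rw [← he, cs.simple_mul_simple_cancel_left]⟩
    rw [invS_mul_T_case]
    by_cases hd : cs.length (cs.simple i * x) = cs.length x + 1 <;>
      by_cases hdy : cs.length (cs.simple i * y) = cs.length y + 1
    · -- hd, hdy : the index s i * y = x cannot occur
      have hsyx : cs.simple i * y ≠ x := by
        intro he
        have h1 : y = cs.simple i * x := hiff.mpr he
        have e1 : cs.length x = cs.length (cs.simple i * y) := by rw [he]
        have e2 : cs.length y = cs.length (cs.simple i * x) := by rw [← h1]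
        omega
      rw [if_pos hd, if_pos hdy]
      simp only [map_add, map_smul, Finsupp.add_apply, Finsupp.smul_apply, repr_T, smul_eq_mul]
      rw [if_congr hiff rfl rfl, if_neg hsyx]
      ring
    · rw [if_pos hd, if_neg hdy]
      have hxy : y ≠ x := by
        intro he; subst he; exact hdy hd
      simp only [map_add, map_smul, Finsupp.add_apply, Finsupp.smul_apply, repr_T, smul_eq_mul]
      rw [if_congr hiff rfl rfl, if_neg hxy]
      ring
    · rw [if_neg hd, if_pos hdy]
      have hxy : y ≠ x := by
        intro he; subst he; exact hd hdy
      simp only [repr_T, smul_eq_mul]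
      rw [if_congr hiff rfl rfl, if_neg hxy]
      ring
    · rw [if_neg hd, if_neg hdy]
      have hd' : cs.length (cs.simple i * x) + 1 = cs.length x :=
        (cs.length_simple_mul x i).resolve_left hd
      have hdy' : cs.length (cs.simple i * y) + 1 = cs.length y :=
        (cs.length_simple_mul y i).resolve_left hdy
      have hsyx : cs.simple i * y ≠ x := by
        intro he
        have h1 : y = cs.simple i * x := hiff.mpr he
        have e1 : cs.length x = cs.length (cs.simple i * y) := by rw [he]
        have e2 : cs.length y = cs.length (cs.simple i * x) := by rw [← h1]
        omega
      simp only [repr_T, smul_eq_mul]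
      rw [if_congr hiff rfl rfl, if_neg hsyx]
      ring
  -- extend by linearity
  by_cases hdy : cs.length (cs.simple i * y) = cs.length y + 1
  · rw [if_pos hdy]
    let L1 : Hk.carrier →ₗ[R] R := (Finsupp.lapply y).comp
      (Hk.basis.repr.toLinearMap.comp (LinearMap.mulLeft R (invS K Hk i)))
    let L2 : Hk.carrier →ₗ[R] R :=
      (K.qinv - 1) • (Finsupp.lapply y).comp Hk.basis.repr.toLinearMap
        + (Finsupp.lapply (cs.simple i * y)).comp Hk.basis.repr.toLinearMap
    have hL : L1 = L2 := by
      apply Hk.basis.ext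
      intro x
      have hk := hkey x
      rw [if_pos hdy] at hk
      simp only [L1, L2, LinearMap.comp_apply, LinearMap.mulLeft_apply, LinearMap.add_apply,
        LinearMap.smul_apply, Finsupp.lapply_apply, LinearEquiv.coe_toLinearMap, smul_eq_mul,
        Hk.basis_eq]
      exact hk
    have := LinearMap.congr_fun hL h
    simpa only [L1, L2, LinearMap.comp_apply, LinearMap.mulLeft_apply, LinearMap.add_apply,
      LinearMap.smul_apply, Finsupp.lapply_apply, LinearEquiv.coe_toLinearMap,
      smul_eq_mul] using this
  · rw [if_neg hdy]
    let L1 : Hk.carrier →ₗ[R] R := (Finsupp.lapply y).comp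
      (Hk.basis.repr.toLinearMap.comp (LinearMap.mulLeft R (invS K Hk i)))
    let L2 : Hk.carrier →ₗ[R] R :=
      K.qinv • (Finsupp.lapply (cs.simple i * y)).comp Hk.basis.repr.toLinearMap
    have hL : L1 = L2 := by
      apply Hk.basis.ext
      intro x
      have hk := hkey x
      rw [if_neg hdy] at hk
      simp only [L1, L2, LinearMap.comp_apply, LinearMap.mulLeft_apply,
        LinearMap.smul_apply, Finsupp.lapply_apply, LinearEquiv.coe_toLinearMap, smul_eq_mul,
        Hk.basis_eq]
      exact hk
    have := LinearMap.congr_fun hL h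
    simpa only [L1, L2, LinearMap.comp_apply, LinearMap.mulLeft_apply,
      LinearMap.smul_apply, Finsupp.lapply_apply, LinearEquiv.coe_toLinearMap,
      smul_eq_mul] using this

end HeckeAux


section InvClaimsAux

variable {cs : CoxeterSystem M W} (K : KLRing R) (Hk : Hecke cs R K.q)

/-- The inductive invariant describing `(T_{u⁻¹})⁻¹` in the standard basis. -/
def InvClaims (u : W) (h : Hk.carrier) : Prop :=
  (∀ x : W, Hk.basis.repr h x ≠ 0 → cs.length x < cs.length u ∨ x = u) ∧
  Hk.basis.repr h u = K.qinv ^ cs.length u ∧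
  ∀ x : W, K.IsLaurent (Hk.basis.repr h x)

lemma isLaurent_qinv : K.IsLaurent K.qinv := by
  have := K.isLaurent_qpow (-1)
  rwa [show ((-1 : ℤ)) = -((1 : ℕ) : ℤ) by norm_num, K.qpow_neg_natCast, pow_one] at this

lemma invClaims_step (i : B) (u : W) (h : Hk.carrier) (hc : InvClaims K Hk u h)
    (hl : cs.length (cs.simple i * u) = cs.length u + 1) :
    InvClaims K Hk (cs.simple i * u) (invS K Hk i * h) := by
  obtain ⟨hsupp, hlead, hlaur⟩ := hc
  refine ⟨?_, ?_, ?_⟩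
  · intro y hy
    rw [repr_invS_mul] at hy
    by_cases hdy : cs.length (cs.simple i * y) = cs.length y + 1
    · rw [if_pos hdy] at hy
      have hor : Hk.basis.repr h y ≠ 0 ∨ Hk.basis.repr h (cs.simple i * y) ≠ 0 := by
        by_contra hcon
        push_neg at hcon
        rw [hcon.1, hcon.2, mul_zero, add_zero] at hy
        exact hy rfl
      rcases hor with h1 | h2
      · rcases hsupp y h1 with hlt | rfl
        · left; omega
        · left; omega
      · rcases hsupp _ h2 with hlt | heq
        · left; omega
        · right
          rw [← heq, cs.simple_mul_simple_cancel_left]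
    · rw [if_neg hdy] at hy
      have hdy' : cs.length (cs.simple i * y) + 1 = cs.length y :=
        (cs.length_simple_mul y i).resolve_left hdy
      have h2 : Hk.basis.repr h (cs.simple i * y) ≠ 0 := by
        intro h0; rw [h0, mul_zero] at hy; exact hy rfl
      rcases hsupp _ h2 with hlt | heq
      · left; omega
      · right
        rw [← heq, cs.simple_mul_simple_cancel_left]
  · rw [repr_invS_mul]
    have hcan : cs.simple i * (cs.simple i * u) = u := cs.simple_mul_simple_cancel_left i
    have hnd : ¬ (cs.length (cs.simple i * (cs.simple i * u))
        = cs.length (cs.simple i * u) + 1) := by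
      rw [hcan]; omega
    rw [if_neg hnd, hcan, hlead, hl, pow_succ]
    ring
  · intro x
    rw [repr_invS_mul]
    by_cases hdy : cs.length (cs.simple i * x) = cs.length x + 1
    · rw [if_pos hdy]
      exact K.isLaurent_add
        (K.isLaurent_mul (K.isLaurent_sub (isLaurent_qinv K) K.isLaurent_one) (hlaur x))
        (hlaur _)
    · rw [if_neg hdy]
      exact K.isLaurent_mul (isLaurent_qinv K) (hlaur _)

lemma invClaims_inv_T (u : W) : InvClaims K Hk u (Ring.inverse (Hk.T u⁻¹)) := by
  suffices H : ∀ (n : ℕ) (u : W), cs.length u = n → InvClaims K Hk u (Ring.inverse (Hk.T u⁻¹))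
    from H _ u rfl
  intro n
  induction n using Nat.strong_induction_on with
  | _ n ih =>
    intro u hn
    rcases eq_or_ne u 1 with rfl | hu
    · rw [inv_one, T_one K Hk, Ring.inverse_one]
      refine ⟨?_, ?_, ?_⟩
      · intro x hx
        right
        by_contra hne
        rw [← T_one K Hk, repr_T, if_neg hne] at hx
        exact hx rfl
      · rw [← T_one K Hk, repr_T, if_pos rfl, cs.length_one, pow_zero]
      · intro x
        rw [← T_one K Hk, repr_T]
        by_cases hx1 : x = 1
        · rw [if_pos hx1]; exact K.isLaurent_one
        · rw [if_neg hx1]; exact K.isLaurent_zero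
    · obtain ⟨i, hi⟩ := cs.exists_leftDescent_of_ne_one hu
      have hlen : cs.length (cs.simple i * u) + 1 = cs.length u := cs.isLeftDescent_iff.mp hi
      set u₀ := cs.simple i * u with hu₀
      have hcan : cs.simple i * u₀ = u := cs.simple_mul_simple_cancel_left i
      have hinveq : u₀⁻¹ * cs.simple i = u⁻¹ := by
        rw [← cs.inv_simple, ← mul_inv_rev, hcan]
      have hlen2 : cs.length (u₀⁻¹ * cs.simple i) = cs.length u₀⁻¹ + cs.length (cs.simple i) := by
        rw [hinveq, cs.length_inv, cs.length_simple, cs.length_inv]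
        omega
      have hTT : Hk.T u⁻¹ = Hk.T u₀⁻¹ * Hk.T (cs.simple i) := by
        rw [Hk.T_mul (u₀⁻¹) (cs.simple i) hlen2, hinveq]
      have hinv : Ring.inverse (Hk.T u⁻¹) = invS K Hk i * Ring.inverse (Hk.T u₀⁻¹) := by
        apply ring_inverse_eq
        · exact isUnit_T K Hk _
        · rw [hTT, mul_assoc, ← mul_assoc (Hk.T (cs.simple i)), T_mul_invS, one_mul,
            Ring.mul_inverse_cancel _ (isUnit_T K Hk _)]
      rw [hinv]
      have hstep := invClaims_step K Hk i u₀ _ (ih _ (by omega) u₀ rfl) (by rw [hcan]; omega)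
      rwa [hcan] at hstep

lemma repr_sum_eq (h : Hk.carrier) :
    h = ∑ x ∈ (Hk.basis.repr h).support, Hk.basis.repr h x • Hk.T x := by
  conv_lhs => rw [← Hk.basis.linearCombination_repr h]
  rw [Finsupp.linearCombination_apply, Finsupp.sum]
  exact Finset.sum_congr rfl fun x _ => by rw [Hk.basis_eq]

lemma bar_coeff (bar : Hk.carrier →+* Hk.carrier) (hbar : IsBar K Hk bar)
    (h : Hk.carrier) (x : W) :
    Hk.basis.repr (bar h) x = ∑ y ∈ (Hk.basis.repr h).support,
      K.conj (Hk.basis.repr h y) * Hk.basis.repr (Ring.inverse (Hk.T y⁻¹)) x := by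
  conv_lhs => rw [repr_sum_eq K Hk h]
  rw [map_sum, map_sum, Finsupp.finset_sum_apply]
  apply Finset.sum_congr rfl
  intro y hy
  rw [hbar _ y, map_smul, Finsupp.smul_apply, smul_eq_mul]

theorem P_poly (bar : Hk.carrier →+* Hk.carrier) (hbar : IsBar K Hk bar)
    (C : W → Hk.carrier) (hC : ∀ w : W, IsKLElt K Hk bar w (C w)) (w x : W) :
    ∃ p : Polynomial ℤ, Polynomial.aeval K.q p = Hk.basis.repr (C w) x ∧
      (x ≠ w → bruhatLE cs x w → 2 * p.natDegree + 1 ≤ cs.length w - cs.length x) := by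
  suffices H : ∀ (m : ℕ) (x : W), cs.length w - cs.length x = m →
      ∃ p : Polynomial ℤ, Polynomial.aeval K.q p = Hk.basis.repr (C w) x ∧
      (x ≠ w → bruhatLE cs x w → 2 * p.natDegree + 1 ≤ cs.length w - cs.length x)
    from H _ x rfl
  intro m
  induction m using Nat.strong_induction_on with
  | _ m ih =>
    intro x hm
    rcases eq_or_ne x w with rfl | hxw
    · exact ⟨1, by rw [map_one, (hC x).1], fun h => absurd rfl h⟩
    by_cases hx0 : Hk.basis.repr (C w) x = 0
    · refine ⟨0, by rw [map_zero, hx0], ?_⟩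
      intro _ hxle
      have := bruhatLE_length_lt hxle hxw
      simp only [Polynomial.natDegree_zero]
      omega
    have hxw' : bruhatLE cs x w := (hC w).2.1 x hx0
    have hlt : cs.length x < cs.length w := bruhatLE_length_lt hxw' hxw
    have hEq := bar_coeff K Hk bar hbar (C w) x
    rw [(hC w).2.2.2, map_smul, Finsupp.smul_apply, smul_eq_mul] at hEq
    have hxsupp : x ∈ (Hk.basis.repr (C w)).support := Finsupp.mem_support_iff.mpr hx0
    rw [← Finset.add_sum_erase _ _ hxsupp, (invClaims_inv_T K Hk x).2.1] at hEq
    set A := ∑ y ∈ ((Hk.basis.repr (C w)).support.erase x),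
      K.conj (Hk.basis.repr (C w) y) * Hk.basis.repr (Ring.inverse (Hk.T y⁻¹)) x with hA
    have hAlaur : K.IsLaurent A := by
      apply K.isLaurent_sum
      intro y hy
      by_cases hρ : Hk.basis.repr (Ring.inverse (Hk.T y⁻¹)) x = 0
      · rw [hρ, mul_zero]; exact K.isLaurent_zero
      · have hy' : y ∈ (Hk.basis.repr (C w)).support := Finset.mem_of_mem_erase hy
        have hyne : y ≠ x := Finset.ne_of_mem_erase hy
        have hylt : cs.length x < cs.length y := by
          rcases (invClaims_inv_T K Hk y).1 x hρ with hlt' | h'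
          · exact hlt'
          · exact absurd h'.symm hyne
        have hyle : bruhatLE cs y w := (hC w).2.1 y (Finsupp.mem_support_iff.mp hy')
        have hylew : cs.length y ≤ cs.length w := bruhatLE_length_le hyle
        obtain ⟨p, hp, _⟩ := ih (cs.length w - cs.length y) (by omega) y rfl
        rw [← hp]
        exact K.isLaurent_mul (K.isLaurent_conj (K.isLaurent_aeval_q p))
          ((invClaims_inv_T K Hk y).2.2 x)
    have hq1 : K.q ^ (cs.length w) * K.qinv ^ (cs.length w) = 1 := by
      rw [← mul_pow, K.q_qinv, one_pow]
    have hq2 : K.q ^ (cs.length w) * K.qinv ^ (cs.length x)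
        = K.q ^ (cs.length w - cs.length x) := by
      have hsplit : cs.length w = (cs.length w - cs.length x) + cs.length x := by omega
      rw [hsplit, pow_add, mul_assoc, ← mul_pow, K.q_qinv, one_pow, mul_one]
      rw [← hsplit]
    have heq2 : Hk.basis.repr (C w) x
        = K.q ^ (cs.length w - cs.length x) * K.conj (Hk.basis.repr (C w) x)
          + K.q ^ (cs.length w) * A := by
      have h3 := congrArg (fun r => K.q ^ (cs.length w) * r) hEq
      rw [← mul_assoc, hq1, one_mul, mul_add, show K.q ^ cs.length w *
        (K.conj (Hk.basis.repr (C w) x) * K.qinv ^ cs.length x)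
        = (K.q ^ cs.length w * K.qinv ^ cs.length x) * K.conj (Hk.basis.repr (C w) x) by ring,
        hq2] at h3
      exact h3
    have hgrade : Hk.basis.repr (C w) x ∈ K.gradeSum (cs.length w - cs.length x) :=
      (hC w).2.2.1 x hxw' hxw
    obtain ⟨p, hp, hdeg⟩ := K.graded_cancel (by omega) hgrade
      (K.isLaurent_mul (K.isLaurent_q_pow _) hAlaur) heq2
    exact ⟨p, hp, fun _ _ => hdeg⟩

end InvClaimsAux


section QAux

variable {cs : CoxeterSystem M W} (K : KLRing R) (Hk : Hecke cs R K.q)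
  (bar : Hk.carrier →+* Hk.carrier) (hbar : IsBar K Hk bar)
  (C : W → Hk.carrier) (hC : ∀ w : W, IsKLElt K Hk bar w (C w))

/-- A choice of polynomial representing the Kazhdan–Lusztig polynomial `P_{y,z}`. -/
noncomputable def Ppoly (y z : W) : Polynomial ℤ :=
  Classical.choose (P_poly K Hk bar hbar C hC z y)

lemma Ppoly_eval (y z : W) : Polynomial.aeval K.q (Ppoly K Hk bar hbar C hC y z)
    = Hk.basis.repr (C z) y :=
  (Classical.choose_spec (P_poly K Hk bar hbar C hC z y)).1

lemma Ppoly_deg (y z : W) (h1 : y ≠ z) (h2 : bruhatLE cs y z) :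
    2 * (Ppoly K Hk bar hbar C hC y z).natDegree + 1 ≤ cs.length z - cs.length y :=
  (Classical.choose_spec (P_poly K Hk bar hbar C hC z y)).2 h1 h2

/-- The inverse Kazhdan–Lusztig polynomial `Q_{w,z}`, defined with a fuel parameter. -/
noncomputable def Qpoly : ℕ → W → W → Polynomial ℤ
  | 0, _, _ => 1
  | n+1, w, z =>
      if w = z then 1 else
        -((-1 : Polynomial ℤ) ^ (cs.length z - cs.length w) *
          ∑ y ∈ (Hk.basis.repr (C z)).support.erase z,
            if bruhatLE cs w y then
              (-1 : Polynomial ℤ) ^ (cs.length y - cs.length w)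
                * Qpoly n w y * Ppoly K Hk bar hbar C hC y z
            else 0)

lemma Qpoly_self (n : ℕ) (w : W) : Qpoly K Hk bar hbar C hC n w w = 1 := by
  cases n with
  | zero => rfl
  | succ n => simp [Qpoly]

include hbar hC in
lemma mem_erase_lt {z y : W} (hy : y ∈ (Hk.basis.repr (C z)).support.erase z) :
    bruhatLE cs y z ∧ cs.length y < cs.length z := by
  have h1 : y ≠ z := Finset.ne_of_mem_erase hy
  have h2 : bruhatLE cs y z :=
    (hC z).2.1 y (Finsupp.mem_support_iff.mp (Finset.mem_of_mem_erase hy))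
  exact ⟨h2, bruhatLE_length_lt h2 h1⟩

lemma Qpoly_stable : ∀ (N n m : ℕ) (w z : W), cs.length z ≤ N → cs.length z ≤ n →
    cs.length z ≤ m →
    Qpoly K Hk bar hbar C hC (n+1) w z = Qpoly K Hk bar hbar C hC (m+1) w z := by
  intro N
  induction N using Nat.strong_induction_on with
  | _ N ihN =>
    intro n m w z hN hn hm
    simp only [Qpoly]
    by_cases hwz : w = z
    · rw [if_pos hwz, if_pos hwz]
    · rw [if_neg hwz, if_neg hwz]
      congr 1
      congr 1
      apply Finset.sum_congr rfl
      intro y hy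
      obtain ⟨hyz, hylt⟩ := mem_erase_lt K Hk bar hbar C hC hy
      by_cases hb : bruhatLE cs w y
      · rw [if_pos hb, if_pos hb]
        obtain ⟨n', rfl⟩ : ∃ n', n = n' + 1 := ⟨n - 1, by omega⟩
        obtain ⟨m', rfl⟩ : ∃ m', m = m' + 1 := ⟨m - 1, by omega⟩
        rw [ihN (cs.length y) (by omega) n' m' w y le_rfl (by omega) (by omega)]
      · rw [if_neg hb, if_neg hb]

lemma Qpoly_degree : ∀ (N n : ℕ) (w z : W), cs.length z ≤ N → cs.length z ≤ n →
    bruhatLE cs w z → w ≠ z →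
    2 * (Qpoly K Hk bar hbar C hC (n+1) w z).natDegree + 1 ≤ cs.length z - cs.length w := by
  intro N
  induction N using Nat.strong_induction_on with
  | _ N ihN =>
    intro n w z hN hn hwz hne
    have hsign : ∀ k : ℕ, ((-1 : Polynomial ℤ) ^ k).natDegree = 0 := by
      intro k
      rw [show ((-1 : Polynomial ℤ)) ^ k = Polynomial.C ((-1) ^ k) by
        rw [map_pow, map_neg, map_one], Polynomial.natDegree_C]
    have hlwz : cs.length w < cs.length z := bruhatLE_length_lt hwz hne
    simp only [Qpoly, if_neg hne]
    rw [Polynomial.natDegree_neg]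
    have hsum : (∑ y ∈ (Hk.basis.repr (C z)).support.erase z,
        if bruhatLE cs w y then
          (-1 : Polynomial ℤ) ^ (cs.length y - cs.length w)
            * Qpoly K Hk bar hbar C hC n w y * Ppoly K Hk bar hbar C hC y z
        else 0).natDegree ≤ (cs.length z - cs.length w - 1) / 2 := by
      apply Polynomial.natDegree_sum_le_of_forall_le
      intro y hy
      obtain ⟨hyz, hylt⟩ := mem_erase_lt K Hk bar hbar C hC hy
      have hyz' : y ≠ z := Finset.ne_of_mem_erase hy
      by_cases hb : bruhatLE cs w y
      · rw [if_pos hb]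
        have hP := Ppoly_deg K Hk bar hbar C hC y z hyz' hyz
        have hwy : cs.length w ≤ cs.length y := bruhatLE_length_le hb
        have hterm : ((-1 : Polynomial ℤ) ^ (cs.length y - cs.length w)
            * Qpoly K Hk bar hbar C hC n w y * Ppoly K Hk bar hbar C hC y z).natDegree
            ≤ (Qpoly K Hk bar hbar C hC n w y).natDegree
              + (Ppoly K Hk bar hbar C hC y z).natDegree := by
          refine le_trans Polynomial.natDegree_mul_le ?_
          refine Nat.add_le_add_right ?_ _
          refine le_trans Polynomial.natDegree_mul_le ?_
          rw [hsign]
          omega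
        by_cases hyw : y = w
        · subst hyw
          rw [Nat.sub_self, pow_zero, one_mul, Qpoly_self, one_mul]
          omega
        · obtain ⟨n', rfl⟩ : ∃ n', n = n' + 1 := ⟨n - 1, by omega⟩
          have hQ := ihN (cs.length y) (by omega) n' w y le_rfl (by omega) hb
            (fun h => hyw h.symm)
          omega
      · rw [if_neg hb]
        simp
    have hfull := le_trans (Polynomial.natDegree_mul_le
      (p := (-1 : Polynomial ℤ) ^ (cs.length z - cs.length w))
      (q := ∑ y ∈ (Hk.basis.repr (C z)).support.erase z,
        if bruhatLE cs w y then
          (-1 : Polynomial ℤ) ^ (cs.length y - cs.length w)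
            * Qpoly K Hk bar hbar C hC n w y * Ppoly K Hk bar hbar C hC y z
        else 0)) (by rw [hsign]; omega : _ ≤ 0 + (cs.length z - cs.length w - 1) / 2)
    omega

/-- The inverse Kazhdan–Lusztig polynomial evaluated in `R`. -/
noncomputable def Qelt (w z : W) : R :=
  Polynomial.aeval K.q (Qpoly K Hk bar hbar C hC (cs.length z + 1) w z)

include hbar hC in
lemma finsum_convert (w z : W) (hwz : bruhatLE cs w z) (g : W → R) :
    (∑ᶠ y ∈ {y : W | bruhatLE cs w y ∧ bruhatLE cs y z}, g y * Hk.basis.repr (C z) y)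
    = ∑ y ∈ ((Hk.basis.repr (C z)).support.filter (fun y => bruhatLE cs w y)),
        g y * Hk.basis.repr (C z) y := by
  set f : W → R := fun y => g y * Hk.basis.repr (C z) y with hf
  have hfin : ({y : W | bruhatLE cs w y ∧ bruhatLE cs y z} ∩ Function.support f).Finite := by
    apply Set.Finite.subset (Hk.basis.repr (C z)).support.finite_toSet
    intro y hy
    have hfy : f y ≠ 0 := hy.2
    have : Hk.basis.repr (C z) y ≠ 0 := fun h0 => hfy (by rw [hf]; simp [h0])
    simpa [Finsupp.mem_support_iff] using this
  rw [finsum_mem_eq_sum f hfin]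
  apply Finset.sum_subset
  · intro y hy
    rw [Set.Finite.mem_toFinset] at hy
    have h1 : Hk.basis.repr (C z) y ≠ 0 := fun h0 => hy.2 (by simp [hf, h0])
    exact Finset.mem_filter.mpr ⟨Finsupp.mem_support_iff.mpr h1, hy.1.1⟩
  · intro y hy hny
    rw [Finset.mem_filter] at hy
    by_contra hfy
    apply hny
    rw [Set.Finite.mem_toFinset]
    exact ⟨⟨hy.2, (hC z).2.1 y (Finsupp.mem_support_iff.mp hy.1)⟩, hfy⟩

lemma Q_equation (w z : W) (hwz : bruhatLE cs w z) :
    (∑ᶠ y ∈ {y : W | bruhatLE cs w y ∧ bruhatLE cs y z},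
      (-1 : R) ^ (cs.length y - cs.length w) * Qelt K Hk bar hbar C hC w y
        * Hk.basis.repr (C z) y)
      = if w = z then 1 else 0 := by
  haveI : Nontrivial R := K.nontrivial
  rw [finsum_convert K Hk bar hbar C hC w z hwz
    (fun y => (-1 : R) ^ (cs.length y - cs.length w) * Qelt K Hk bar hbar C hC w y)]
  set t := ((Hk.basis.repr (C z)).support.filter (fun y => bruhatLE cs w y)) with ht
  have hzt : z ∈ t := by
    rw [ht, Finset.mem_filter, Finsupp.mem_support_iff, (hC z).1]
    exact ⟨one_ne_zero, hwz⟩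
  by_cases hwz' : w = z
  · subst hwz'
    rw [if_pos rfl]
    have htw : t = {w} := by
      apply Finset.eq_singleton_iff_unique_mem.mpr
      refine ⟨hzt, ?_⟩
      intro y hy
      rw [ht, Finset.mem_filter] at hy
      have h2 : bruhatLE cs y w :=
        (hC w).2.1 y (Finsupp.mem_support_iff.mp hy.1)
      exact bruhatLE_antisymm h2 hy.2
    rw [htw, Finset.sum_singleton, (hC w).1, mul_one, Nat.sub_self, pow_zero, one_mul,
      Qelt, Qpoly_self, map_one]
  · rw [if_neg hwz']
    rw [← Finset.sum_erase_add t _ hzt]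
    have hfz : (-1 : R) ^ (cs.length z - cs.length w) * Qelt K Hk bar hbar C hC w z
        * Hk.basis.repr (C z) z
        = -∑ y ∈ t.erase z, (-1 : R) ^ (cs.length y - cs.length w)
            * Qelt K Hk bar hbar C hC w y * Hk.basis.repr (C z) y := by
      rw [(hC z).1, mul_one, Qelt]
      have hunfold : Qpoly K Hk bar hbar C hC (cs.length z + 1) w z =
          -((-1 : Polynomial ℤ) ^ (cs.length z - cs.length w) *
            ∑ y ∈ (Hk.basis.repr (C z)).support.erase z,
              if bruhatLE cs w y then
                (-1 : Polynomial ℤ) ^ (cs.length y - cs.length w)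
                  * Qpoly K Hk bar hbar C hC (cs.length z) w y
                  * Ppoly K Hk bar hbar C hC y z
              else 0) := by
        simp only [Qpoly, if_neg hwz']
      rw [hunfold, map_neg, map_mul, map_pow, map_neg, map_one, ← mul_neg, ← mul_assoc,
        ← mul_pow, neg_mul_neg, one_mul, one_pow, one_mul]
      congr 1
      rw [map_sum]
      have herase : t.erase z
          = ((Hk.basis.repr (C z)).support.erase z).filter (fun y => bruhatLE cs w y) := by
        rw [ht, Finset.filter_erase]
      rw [herase, Finset.sum_filter]
      apply Finset.sum_congr rfl
      intro y hy
      obtain ⟨hyz, hylt⟩ := mem_erase_lt K Hk bar hbar C hC hy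
      by_cases hb : bruhatLE cs w y
      · rw [if_pos hb, if_pos hb, map_mul, map_mul, map_pow, map_neg, map_one,
          Ppoly_eval K Hk bar hbar C hC y z]
        obtain ⟨n', hn'⟩ : ∃ n', cs.length z = n' + 1 := ⟨cs.length z - 1, by omega⟩
        rw [hn', Qpoly_stable K Hk bar hbar C hC (cs.length y) n' (cs.length y) w y le_rfl
          (by omega) le_rfl]
        rfl
      · rw [if_neg hb, if_neg hb, map_zero]
    rw [hfz]; exact add_neg_cancel _

theorem Q_uniqueness (Q' : W → W → R)
    (hQ' : ∀ w z : W, bruhatLE cs w z →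
      (∑ᶠ y ∈ {y : W | bruhatLE cs w y ∧ bruhatLE cs y z},
        (-1 : R) ^ (cs.length y - cs.length w) * Q' w y * Hk.basis.repr (C z) y)
        = if w = z then 1 else 0) :
    ∀ w z : W, bruhatLE cs w z → Q' w z = Qelt K Hk bar hbar C hC w z := by
  haveI : Nontrivial R := K.nontrivial
  suffices H : ∀ (N : ℕ) (w z : W), cs.length z ≤ N → bruhatLE cs w z →
      Q' w z = Qelt K Hk bar hbar C hC w z from fun w z h => H _ w z le_rfl h
  intro N
  induction N using Nat.strong_induction_on with
  | _ N ihN =>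
    intro w z hN hwz
    have h1 := hQ' w z hwz
    have h2 := Q_equation K Hk bar hbar C hC w z hwz
    rw [finsum_convert K Hk bar hbar C hC w z hwz
      (fun y => (-1 : R) ^ (cs.length y - cs.length w) * Q' w y)] at h1
    rw [finsum_convert K Hk bar hbar C hC w z hwz
      (fun y => (-1 : R) ^ (cs.length y - cs.length w) * Qelt K Hk bar hbar C hC w y)] at h2
    set t := ((Hk.basis.repr (C z)).support.filter (fun y => bruhatLE cs w y)) with ht
    have hzt : z ∈ t := by
      rw [ht, Finset.mem_filter, Finsupp.mem_support_iff, (hC z).1]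
      exact ⟨one_ne_zero, hwz⟩
    have hdiff : ∑ y ∈ t, ((-1 : R) ^ (cs.length y - cs.length w) * Q' w y
        * Hk.basis.repr (C z) y
        - (-1 : R) ^ (cs.length y - cs.length w) * Qelt K Hk bar hbar C hC w y
          * Hk.basis.repr (C z) y) = 0 := by
      rw [Finset.sum_sub_distrib, h1, h2, sub_self]
    rw [Finset.sum_eq_single_of_mem z hzt] at hdiff
    · rw [(hC z).1, mul_one, mul_one, ← mul_sub] at hdiff
      have hsq : (-1 : R) ^ (cs.length z - cs.length w)
          * (-1 : R) ^ (cs.length z - cs.length w) = 1 := by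
        rw [← mul_pow, neg_mul_neg, one_mul, one_pow]
      have := congrArg (fun r => (-1 : R) ^ (cs.length z - cs.length w) * r) hdiff
      simp only [mul_zero] at this
      rw [← mul_assoc, hsq, one_mul] at this
      exact sub_eq_zero.mp this
    · intro y hy hyz
      rw [ht, Finset.mem_filter] at hy
      have hylez : bruhatLE cs y z := (hC z).2.1 y (Finsupp.mem_support_iff.mp hy.1)
      have hylt : cs.length y < cs.length z := bruhatLE_length_lt hylez hyz
      rw [ihN (cs.length y) (by omega) w y le_rfl hy.2, sub_self]

end QAux


/-- existence and uniqueness of the inverse Kazhdan–Lusztig polynomials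
`Q_{w,y}` (for `w ≤ y`), determined by
`Σ_{w ≤ y ≤ z} (-1)^{ℓ(y)-ℓ(w)} Q_{w,y} P_{y,z} = δ_{w,z}`; moreover each `Q_{w,y} ∈ ℤ[q]`,
`Q_{w,w} = 1` and `deg Q_{w,y} ≤ (ℓ(y)-ℓ(w)-1)/2` for `w < y`.
Here the Kazhdan–Lusztig polynomial `P_{y,z}` is the coefficient `Hk.basis.repr (C z) y`
of the Kazhdan–Lusztig basis element `C z = C_z`. -/
theorem statement3 (K : KLRing R) (Hk : Hecke cs R K.q)
    (bar : Hk.carrier →+* Hk.carrier) (hbar : IsBar K Hk bar)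
    (C : W → Hk.carrier) (hC : ∀ w : W, IsKLElt K Hk bar w (C w)) :
    ∃ Q : W → W → R,
      (∀ w z : W, bruhatLE cs w z →
        (∑ᶠ y ∈ {y : W | bruhatLE cs w y ∧ bruhatLE cs y z},
          (-1 : R) ^ (cs.length y - cs.length w) * Q w y * Hk.basis.repr (C z) y)
          = if w = z then 1 else 0) ∧
      (∀ w y : W, bruhatLE cs w y → K.InZq (Q w y)) ∧
      (∀ w : W, Q w w = 1) ∧
      (∀ w y : W, bruhatLE cs w y → w ≠ y →
        ∃ p : Polynomial ℤ, Polynomial.aeval K.q p = Q w y ∧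
          2 * p.natDegree ≤ cs.length y - cs.length w - 1) ∧
      (∀ Q' : W → W → R,
        (∀ w z : W, bruhatLE cs w z →
          (∑ᶠ y ∈ {y : W | bruhatLE cs w y ∧ bruhatLE cs y z},
            (-1 : R) ^ (cs.length y - cs.length w) * Q' w y * Hk.basis.repr (C z) y)
            = if w = z then 1 else 0) →
        ∀ w y : W, bruhatLE cs w y → Q' w y = Q w y) := by
  refine ⟨Qelt K Hk bar hbar C hC, ?_, ?_, ?_, ?_, ?_⟩
  · exact fun w z h => Q_equation K Hk bar hbar C hC w z h
  · intro w y _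
    exact ⟨Qpoly K Hk bar hbar C hC (cs.length y + 1) w y, rfl⟩
  · intro w
    rw [Qelt, Qpoly_self, map_one]
  · intro w y hwy hne
    refine ⟨Qpoly K Hk bar hbar C hC (cs.length y + 1) w y, rfl, ?_⟩
    have := Qpoly_degree K Hk bar hbar C hC (cs.length y) (cs.length y) w y le_rfl le_rfl hwy hne
    omega
  · intro Q' hQ' w y hwy
    exact Q_uniqueness K Hk bar hbar C hC Q' hQ' w y hwy

end KLPaper
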